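/- (Triple spread formula) Suppose a non-null triangle U, V, W has spreads s_U, s_V and s_W. Then (s_U + s_V + s_W)² = 2(s_U² + s_V² + s_W²) + 4·s_U·s_V·s_W. -/

import Mathlib

/-- The quadrance between points `U` and `W` with respect to the bilinear form `B`. -/
def quadrance {F : Type*} [Field F] {M : Type*} [AddCommGroup M] [Module F M]
    (B : LinearMap.BilinForm F M) (U W : M) : F :=
  B (W - U) (W - U)

/-- The spread between the lines `U W` and `X Z` with respect to the bilinear form `B`. -/
def spread {F : Type*} [Field F] {M : Type*} [AddCommGroup M] [Module F M]
    (B : LinearMap.BilinForm F M) (U W X Z : M) : F :=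
  1 - (B (W - U) (Z - X)) ^ 2 / (quadrance B U W * quadrance B X Z)

private lemma triple_spread_key {F : Type*} [Field F] (x y p z : F)
    (hx : x ≠ 0) (hy : y ≠ 0) (hz : z ≠ 0) (hrel : x + y - 2 * p = z) :
    ((1 - p ^ 2 / (x * y)) + (1 - (x - p) ^ 2 / (x * z))
        + (1 - (y - p) ^ 2 / (y * z))) ^ 2 =
      2 * ((1 - p ^ 2 / (x * y)) ^ 2 + (1 - (x - p) ^ 2 / (x * z)) ^ 2
        + (1 - (y - p) ^ 2 / (y * z)) ^ 2) +
      4 * (1 - p ^ 2 / (x * y)) * (1 - (x - p) ^ 2 / (x * z))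
        * (1 - (y - p) ^ 2 / (y * z)) := by
  field_simp
  subst hrel
  ring

theorem triple_spread_formula
    {F : Type*} [Field F] (hchar : (2 : F) ≠ 0)
    {M : Type*} [AddCommGroup M] [Module F M]
    (B : LinearMap.BilinForm F M) (hsym : ∀ x y : M, B x y = B y x)
    (U V W : M) (hUV : U ≠ V) (hUW : U ≠ W) (hVW : V ≠ W)
    (hncol : ∀ a b : F, a • (V - U) + b • (W - U) = 0 → a = 0 ∧ b = 0)
    (hQU : quadrance B V W ≠ 0) (hQV : quadrance B U W ≠ 0)
    (hQW : quadrance B U V ≠ 0)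
 :
    (spread B U V U W + spread B V U V W + spread B W U W V) ^ 2 =
      2 * (spread B U V U W ^ 2 + spread B V U V W ^ 2 + spread B W U W V ^ 2) +
        4 * spread B U V U W * spread B V U V W * spread B W U W V := by
  have e1 : U - V = -(V - U) := by abel
  have e2 : W - V = (W - U) - (V - U) := by abel
  have e3 : U - W = -(W - U) := by abel
  have e4 : V - W = (V - U) - (W - U) := by abel
  have hpv : B (W - U) (V - U) = B (V - U) (W - U) := hsym _ _
  have qUV : quadrance B U V = B (V - U) (V - U) := rfl
  have qUW : quadrance B U W = B (W - U) (W - U) := rfl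
  have qVU : quadrance B V U = B (V - U) (V - U) := by
    simp only [quadrance, e1, map_neg, LinearMap.neg_apply, neg_neg]
  have qVW : quadrance B V W =
      B (V - U) (V - U) + B (W - U) (W - U) - 2 * B (V - U) (W - U) := by
    rw [quadrance, e2]
    simp only [map_sub, LinearMap.sub_apply]
    simp only [hsym V U, hsym W U, hsym W V]
    ring
  have qWU : quadrance B W U = B (W - U) (W - U) := by
    simp only [quadrance, e3, map_neg, LinearMap.neg_apply, neg_neg]
  have qWV : quadrance B W V =
      B (V - U) (V - U) + B (W - U) (W - U) - 2 * B (V - U) (W - U) := by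
    rw [quadrance, e4]
    simp only [map_sub, LinearMap.sub_apply]
    simp only [hsym V U, hsym W U, hsym W V]
    ring
  have b2 : B (U - V) (W - V) = B (V - U) (V - U) - B (V - U) (W - U) := by
    rw [e1, e2]
    simp only [map_neg, map_sub, LinearMap.neg_apply, LinearMap.sub_apply]
    simp only [hsym V U, hsym W U, hsym W V]
    ring
  have b3 : B (U - W) (V - W) = B (W - U) (W - U) - B (V - U) (W - U) := by
    rw [e3, e4]
    simp only [map_neg, map_sub, LinearMap.neg_apply, LinearMap.sub_apply]
    simp only [hsym V U, hsym W U, hsym W V]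
    ring
  rw [qVW] at hQU
  rw [qUW] at hQV
  rw [qUV] at hQW
  rw [spread, spread, spread, b2, b3, qUV, qUW, qVU, qVW, qWU, qWV]
  exact triple_spread_key _ _ _ _ hQW hQV hQU rfl
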